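/- Let q be a prime power and let n, k, δ be integers with 0 ≤ δ ≤ k ≤ n. Then A_q(n, 2δ+2, k) ≥ C_q(n, k, k−δ) + [n choose k−δ]_q − [k choose k−δ]_q · C_q(n, k, k−δ). -/

import Mathlib

open Module

/-- The Gaussian binomial coefficient `[n choose k]_q`, as a real number:
`∏_{i=0}^{k-1} (q^{n-i}-1)/(q^{k-i}-1)`. -/
noncomputable def gaussBinom (q n k : ℕ) : ℝ :=
  ∏ i ∈ Finset.range k, ((q : ℝ) ^ (n - i) - 1) / ((q : ℝ) ^ (k - i) - 1)

/-- `C` is a constant dimension code in the Grassmannian `G_q(n,k)` with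
minimum subspace distance at least `d`: all its elements are `k`-dimensional
subspaces of `F^n`, and `d_S(U,V) = 2k - 2 dim(U ⊓ V) ≥ d` for distinct `U,V ∈ C`. -/
def IsGrassmannCode (F : Type) [Field F] (n k d : ℕ)
    (C : Finset (Submodule F (Fin n → F))) : Prop :=
  (∀ U ∈ C, finrank F ↥U = k) ∧
  ∀ U ∈ C, ∀ V ∈ C, U ≠ V → d ≤ 2 * k - 2 * finrank F ↥(U ⊓ V)

/-- `A_q(n,d,k)`: the maximum size of an `(n,M,d,k)_q` code. -/
noncomputable def maxCodeSize (F : Type) [Field F] (n d k : ℕ) : ℕ :=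
  sSup {M | ∃ C : Finset (Submodule F (Fin n → F)), IsGrassmannCode F n k d C ∧ C.card = M}

/-- `C` is a `q`-covering design `C_q(n,k,r)`: a set of `k`-dimensional subspaces of
`F^n` such that every `r`-dimensional subspace is contained in at least one of them. -/
def IsCoveringDesign (F : Type) [Field F] (n k r : ℕ)
    (C : Finset (Submodule F (Fin n → F))) : Prop :=
  (∀ U ∈ C, finrank F ↥U = k) ∧
  ∀ W : Submodule F (Fin n → F), finrank F ↥W = r → ∃ U ∈ C, W ≤ U

/-- `𝒞_q(n,k,r)`: the minimum size of a `q`-covering design `C_q(n,k,r)`. -/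
noncomputable def minCoverSize (F : Type) [Field F] (n k r : ℕ) : ℕ :=
  sInf {M | ∃ C : Finset (Submodule F (Fin n → F)), IsCoveringDesign F n k r C ∧ C.card = M}

section Aux

variable {F V : Type*} [Field F] [AddCommGroup V] [Module F V]

/-- Between any submodule `W` and an ambient submodule `X ⊇ W` there are submodules of
every intermediate dimension. -/
lemma exists_finrank_between [FiniteDimensional F V] (W X : Submodule F V) (hWX : W ≤ X)
    {r : ℕ} (h1 : finrank F W ≤ r) (h2 : r ≤ finrank F X) :
    ∃ U : Submodule F V, W ≤ U ∧ U ≤ X ∧ finrank F ↥U = r := by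
  induction r, h1 using Nat.le_induction with
  | base => exact ⟨W, le_rfl, hWX, rfl⟩
  | succ r hr ih =>
    obtain ⟨U, hWU, hUX, hU⟩ := ih (Nat.le_of_succ_le h2)
    have hUlt : U < X := by
      refine lt_of_le_of_ne hUX (fun h => ?_)
      subst h; omega
    obtain ⟨x, hxX, hxU⟩ := SetLike.exists_of_lt hUlt
    have hx0 : x ≠ 0 := fun h => hxU (h ▸ U.zero_mem)
    refine ⟨U ⊔ F ∙ x, le_trans hWU le_sup_left,
      sup_le hUX ((Submodule.span_singleton_le_iff_mem x X).2 hxX), ?_⟩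
    have hinf : U ⊓ (F ∙ x) = ⊥ := by
      rw [eq_bot_iff]
      rintro y hy
      rw [Submodule.mem_inf] at hy
      obtain ⟨hyU, hyx⟩ := hy
      obtain ⟨a, rfl⟩ := Submodule.mem_span_singleton.1 hyx
      rcases eq_or_ne a 0 with rfl | ha
      · simp
      · exact absurd (by simpa [smul_smul, inv_mul_cancel₀ ha] using U.smul_mem a⁻¹ hyU) hxU
    have hdim := Submodule.finrank_sup_add_finrank_inf_eq U (F ∙ x)
    rw [hinf, finrank_bot, finrank_span_singleton hx0] at hdim
    omega

variable [Fintype F] [Finite V]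

/-- The number of `r`-dimensional subspaces times the number of bases of an `r`-dimensional
space equals the number of linearly independent `r`-tuples. -/
lemma card_grassmannian_mul {r : ℕ} (hr : r ≤ finrank F V) :
    Nat.card {W : Submodule F V // finrank F ↥W = r} *
      ∏ i : Fin r, (Fintype.card F ^ r - Fintype.card F ^ i.val) =
      ∏ i : Fin r, (Fintype.card F ^ finrank F V - Fintype.card F ^ i.val) := by
  classical
  haveI := Fintype.ofFinite V
  set q := Fintype.card F
  let Φ : {s : Fin r → V // LinearIndependent F s} → {W : Submodule F V // finrank F ↥W = r} :=
    fun s => ⟨Submodule.span F (Set.range s.1), by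
      rw [finrank_span_eq_card s.2, Fintype.card_fin]⟩
  have hfiber : ∀ W : {W : Submodule F V // finrank F ↥W = r},
      Nat.card {s // Φ s = W} = ∏ i : Fin r, (q ^ r - q ^ i.val) := by
    intro W
    have e : {s // Φ s = W} ≃ {t : Fin r → ↥W.1 // LinearIndependent F t} :=
      { toFun := fun s => ⟨fun i => ⟨s.1.1 i, by
            have h : Submodule.span F (Set.range s.1.1) = W.1 := congrArg Subtype.val s.2
            rw [← h]; exact Submodule.subset_span (Set.mem_range_self i)⟩, by
            apply LinearIndependent.of_comp (W.1).subtype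
            exact s.1.2⟩
        invFun := fun t => ⟨⟨fun i => ((t.1 i : V)), by
            have := t.2.map' (W.1).subtype (Submodule.ker_subtype _)
            exact this⟩, by
            apply Subtype.ext
            show Submodule.span F (Set.range fun i => ((t.1 i : V))) = W.1
            have hco : (fun i => ((t.1 i : V))) = (W.1).subtype ∘ t.1 := rfl
            rw [hco, Set.range_comp, ← Submodule.map_span]
            have htop : Submodule.span F (Set.range t.1) = ⊤ := by
              apply Submodule.eq_top_of_finrank_eq
              rw [finrank_span_eq_card t.2, Fintype.card_fin, W.2]
            rw [htop, Submodule.map_subtype_top]⟩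
        left_inv := fun s => Subtype.ext (Subtype.ext rfl)
        right_inv := fun t => Subtype.ext rfl }
    rw [Nat.card_congr e, card_linearIndependent (by rw [W.2])]
    simp [W.2]
    rfl
  have h1 : Nat.card {s : Fin r → V // LinearIndependent F s}
      = Nat.card {W : Submodule F V // finrank F ↥W = r} * ∏ i : Fin r, (q ^ r - q ^ i.val) := by
    rw [Nat.card_congr (Equiv.sigmaFiberEquiv Φ).symm, Nat.card_eq_fintype_card,
      Fintype.card_sigma]
    simp only [← Nat.card_eq_fintype_card, hfiber]
    rw [Finset.sum_const, Finset.card_univ, ← Nat.card_eq_fintype_card, smul_eq_mul]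
  rw [← h1, card_linearIndependent hr]

lemma gauss_mul {q : ℕ} (hq : 2 ≤ q) {d r : ℕ} (hr : r ≤ d) :
    gaussBinom q d r * ∏ i ∈ Finset.range r, ((q : ℝ) ^ r - (q : ℝ) ^ i)
      = ∏ i ∈ Finset.range r, ((q : ℝ) ^ d - (q : ℝ) ^ i) := by
  rw [gaussBinom, ← Finset.prod_mul_distrib]
  refine Finset.prod_congr rfl (fun i hi => ?_)
  have hir : i < r := Finset.mem_range.1 hi
  have hq1 : (1 : ℝ) < (q : ℝ) := by exact_mod_cast hq
  have h1 : (q : ℝ) ^ r - (q : ℝ) ^ i = (q : ℝ) ^ i * ((q : ℝ) ^ (r - i) - 1) := by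
    rw [mul_sub, mul_one, ← pow_add]
    congr 2
    omega
  have h2 : (q : ℝ) ^ d - (q : ℝ) ^ i = (q : ℝ) ^ i * ((q : ℝ) ^ (d - i) - 1) := by
    rw [mul_sub, mul_one, ← pow_add]
    congr 2
    omega
  have hne : (q : ℝ) ^ (r - i) - 1 ≠ 0 := by
    have : (1 : ℝ) < (q : ℝ) ^ (r - i) := one_lt_pow₀ hq1 (by omega)
    linarith
  rw [h1, h2]
  field_simp

lemma prodPow_pos {q : ℕ} (hq : 2 ≤ q) (r : ℕ) :
    (0 : ℝ) < ∏ i ∈ Finset.range r, ((q : ℝ) ^ r - (q : ℝ) ^ i) := by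
  refine Finset.prod_pos (fun i hi => ?_)
  have hir : i < r := Finset.mem_range.1 hi
  have hq1 : (1 : ℝ) < (q : ℝ) := by exact_mod_cast hq
  have := pow_lt_pow_right₀ hq1 hir
  linarith

lemma card_grass_real {r : ℕ} (hr : r ≤ finrank F V) :
    (Nat.card {W : Submodule F V // finrank F ↥W = r} : ℝ)
      = gaussBinom (Fintype.card F) (finrank F V) r := by
  set q := Fintype.card F with hqdef
  have hq : 2 ≤ q := Fintype.one_lt_card
  have key := card_grassmannian_mul (F := F) (V := V) hr
  have hcast : ∀ m : ℕ, r ≤ m → ((∏ i : Fin r, (q ^ m - q ^ i.val) : ℕ) : ℝ)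
      = ∏ i ∈ Finset.range r, ((q : ℝ) ^ m - (q : ℝ) ^ i) := by
    intro m hrm
    rw [Fin.prod_univ_eq_prod_range (fun i => (q ^ m - q ^ i : ℕ)) r]
    rw [Nat.cast_prod]
    refine Finset.prod_congr rfl (fun i hi => ?_)
    have hir : i < r := Finset.mem_range.1 hi
    have h : q ^ i ≤ q ^ m := Nat.pow_le_pow_right (by omega) (by omega)
    push_cast [Nat.cast_sub h]
    ring
  have hP := prodPow_pos hq r
  have hkey : (Nat.card {W : Submodule F V // finrank F ↥W = r} : ℝ) *
      ∏ i ∈ Finset.range r, ((q : ℝ) ^ r - (q : ℝ) ^ i)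
      = ∏ i ∈ Finset.range r, ((q : ℝ) ^ (finrank F V) - (q : ℝ) ^ i) := by
    rw [← hcast r le_rfl, ← hcast (finrank F V) hr, ← Nat.cast_mul, key]
  have hg := gauss_mul hq hr (q := q)
  have := hkey.trans hg.symm
  exact mul_right_cancel₀ (ne_of_gt hP) this

/-- The number of `r`-dimensional subspaces contained in a given subspace `U`. -/
lemma card_grass_le_real (U : Submodule F V) {r : ℕ} (hr : r ≤ finrank F ↥U) :
    (Nat.card {W : Submodule F V // W ≤ U ∧ finrank F ↥W = r} : ℝ)
      = gaussBinom (Fintype.card F) (finrank F ↥U) r := by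
  rw [← card_grass_real (F := F) (V := ↥U) hr]
  congr 1
  refine Nat.card_congr (Equiv.symm ⟨?_, ?_, ?_, ?_⟩)
  · refine fun W' => ⟨Submodule.map U.subtype W'.1, Submodule.map_subtype_le U W'.1, ?_⟩
    rw [Submodule.finrank_map_subtype_eq]
    exact W'.2
  · refine fun W => ⟨Submodule.comap U.subtype W.1, ?_⟩
    have hm : Submodule.map U.subtype (Submodule.comap U.subtype W.1) = W.1 := by
      rw [Submodule.map_comap_subtype, inf_eq_right.2 W.2.1]
    have h2 := Submodule.finrank_map_subtype_eq U (Submodule.comap U.subtype W.1)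
    rw [hm] at h2
    rw [← h2]
    exact W.2.2
  · intro W'
    apply Subtype.ext
    simp [Submodule.comap_map_eq, Submodule.ker_subtype]
  · intro W
    apply Subtype.ext
    simp [Submodule.map_comap_subtype, inf_eq_right.2 W.2.1]

end Aux

/-- `A_q(n,2δ+2,k) ≥ 𝒞_q(n,k,k-δ) + [n choose k-δ]_q - [k choose k-δ]_q ⬝ 𝒞_q(n,k,k-δ)`. -/
theorem code_ge_cover (F : Type) [Field F] [Fintype F] (n k δ : ℕ)
    (hδk : δ ≤ k) (hkn : k ≤ n) :
    (maxCodeSize F n (2 * δ + 2) k : ℝ) ≥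
      (minCoverSize F n k (k - δ) : ℝ) +
        gaussBinom (Fintype.card F) n (k - δ) -
        gaussBinom (Fintype.card F) k (k - δ) * (minCoverSize F n k (k - δ) : ℝ) := by
  classical
  set q := Fintype.card F with hq
  set r := k - δ with hr_def
  have hrk : r ≤ k := Nat.sub_le _ _
  have hrn : r ≤ n := le_trans hrk hkn
  haveI : Finite (Submodule F (Fin n → F)) :=
    Finite.of_injective (fun W => (W : Set (Fin n → F))) SetLike.coe_injective
  haveI := Fintype.ofFinite (Submodule F (Fin n → F))
  have hfr : finrank F (Fin n → F) = n := Module.finrank_fin_fun F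
  -- there exists a covering design
  have hex : ∃ C : Finset (Submodule F (Fin n → F)), IsCoveringDesign F n k r C := by
    refine ⟨Finset.univ.filter (fun U => finrank F ↥U = k), fun U hU => ?_, fun W hW => ?_⟩
    · simpa using (Finset.mem_filter.1 hU).2
    · obtain ⟨U, hWU, -, hUk⟩ := exists_finrank_between W ⊤ le_top
        (r := k) (by rw [hW]; exact hrk) (by rw [finrank_top, hfr]; exact hkn)
      exact ⟨U, by simp [hUk], hWU⟩
  -- a minimum covering design D
  obtain ⟨D, hD, hDcard⟩ :
      minCoverSize F n k r ∈
        {M | ∃ C : Finset (Submodule F (Fin n → F)), IsCoveringDesign F n k r C ∧ C.card = M} := by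
    apply Nat.sInf_mem
    obtain ⟨C, hC⟩ := hex
    exact ⟨C.card, C, hC, rfl⟩
  -- the set of all r-dimensional subspaces
  set 𝒲 : Finset (Submodule F (Fin n → F)) :=
    Finset.univ.filter (fun W => finrank F ↥W = r) with h𝒲
  have hNcard : (𝒲.card : ℝ) = gaussBinom q n r := by
    have h := card_grass_real (F := F) (V := Fin n → F) (r := r) (by rw [hfr]; exact hrn)
    rw [hfr] at h
    rw [← h, Nat.card_eq_fintype_card, Fintype.card_subtype]
  have hGcard : ∀ U ∈ D, ((𝒲.filter (fun W => W ≤ U)).card : ℝ) = gaussBinom q k r := by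
    intro U hU
    have hUk : finrank F ↥U = k := hD.1 U hU
    have h := card_grass_le_real (F := F) (V := Fin n → F) U (r := r) (by rw [hUk]; exact hrk)
    rw [hUk] at h
    rw [← h, Nat.card_eq_fintype_card, Fintype.card_subtype]
    norm_cast
    congr 1
    ext W
    simp [h𝒲, Finset.mem_filter, and_comm]
  -- choose a maximal sub-family of D with pairwise small intersections
  set P : Finset (Submodule F (Fin n → F)) → Prop :=
    fun C => ∀ U : Submodule F (Fin n → F), U ∈ C → ∀ V : Submodule F (Fin n → F), V ∈ C →
      U ≠ V → finrank F ↥(U ⊓ V) < r with hP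
  have hSne : (D.powerset.filter P).Nonempty := by
    refine ⟨∅, Finset.mem_filter.2 ⟨Finset.empty_mem_powerset D, by simp [hP]⟩⟩
  obtain ⟨C, hCS, hCmax⟩ := Finset.exists_max_image _ Finset.card hSne
  have hCD : C ⊆ D := Finset.mem_powerset.1 (Finset.mem_filter.1 hCS).1
  have hPC : ∀ U ∈ C, ∀ V ∈ C, U ≠ V → finrank F ↥(U ⊓ V) < r := fun U hU V hV =>
    (Finset.mem_filter.1 hCS).2 U hU V hV
  have hblock : ∀ U ∈ D, U ∉ C → ∃ Vb ∈ C, r ≤ finrank F ↥(U ⊓ Vb) := by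
    intro U hU hUC
    by_contra hcon
    push_neg at hcon
    have hmem : insert U C ∈ D.powerset.filter P := by
      refine Finset.mem_filter.2 ⟨Finset.mem_powerset.2 ?_, ?_⟩
      · intro x hx
        rcases Finset.mem_insert.1 hx with rfl | hx
        · exact hU
        · exact hCD hx
      · intro a ha b hb hab
        rcases Finset.mem_insert.1 ha with rfl | ha'
        · rcases Finset.mem_insert.1 hb with rfl | hb'
          · exact absurd rfl hab
          · exact hcon b hb'
        · rcases Finset.mem_insert.1 hb with rfl | hb'
          · rw [inf_comm]; exact hcon a ha'
          · exact hPC a ha' b hb' hab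
    have := hCmax _ hmem
    rw [Finset.card_insert_of_notMem hUC] at this
    omega
  -- choose, for each uncovered block, a witness pair
  have key : ∀ U : Submodule F (Fin n → F),
      ∃ VW : Submodule F (Fin n → F) × Submodule F (Fin n → F),
        U ∈ D \ C → (VW.1 ∈ C ∧ VW.2 ≤ U ∧ VW.2 ≤ VW.1 ∧ finrank F ↥VW.2 = r) := by
    intro U
    by_cases hU : U ∈ D \ C
    · rw [Finset.mem_sdiff] at hU
      obtain ⟨Vb, hVb, hrle⟩ := hblock U hU.1 hU.2
      obtain ⟨W, -, hWle, hWr⟩ := exists_finrank_between ⊥ (U ⊓ Vb) bot_le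
        (r := r) (by simp) hrle
      exact ⟨(Vb, W), fun _ =>
        ⟨hVb, le_trans hWle inf_le_left, le_trans hWle inf_le_right, hWr⟩⟩
    · exact ⟨(⊥, ⊥), fun h => absurd h hU⟩
  choose VW hVW using key
  set f : Submodule F (Fin n → F) → Submodule F (Fin n → F) := fun U => (VW U).2 with hf
  set g : Submodule F (Fin n → F) → Submodule F (Fin n → F) := fun U => (VW U).1 with hg
  have hVW1 : ∀ U ∈ D \ C, g U ∈ C := fun U hU => (hVW U hU).1
  have hVW2 : ∀ U ∈ D \ C, f U ≤ U := fun U hU => (hVW U hU).2.1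
  have hVW3 : ∀ U ∈ D \ C, f U ≤ g U := fun U hU => (hVW U hU).2.2.1
  have hVW4 : ∀ U ∈ D \ C, finrank F ↥(f U) = r := fun U hU => (hVW U hU).2.2.2
  have hmapsto : ∀ U ∈ D \ C, f U ∈ 𝒲 := by
    intro U hU
    simp [h𝒲, hVW4 U hU]
  have hcount : (D \ C).card = ∑ W ∈ 𝒲, ((D \ C).filter (fun U => f U = W)).card :=
    Finset.card_eq_sum_card_fiberwise hmapsto
  have hc1 : ∀ W ∈ 𝒲, 1 ≤ (D.filter (fun U => W ≤ U)).card := by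
    intro W hW
    obtain ⟨U0, hU0, hWU0⟩ := hD.2 W (by simpa [h𝒲] using hW)
    exact Finset.card_pos.2 ⟨U0, Finset.mem_filter.2 ⟨hU0, hWU0⟩⟩
  have hfiber_le : ∀ W ∈ 𝒲, ((D \ C).filter (fun U => f U = W)).card
      ≤ (D.filter (fun U => W ≤ U)).card - 1 := by
    intro W hW
    rcases Finset.eq_empty_or_nonempty ((D \ C).filter (fun U => f U = W)) with he | hne
    · simp [he]
    · obtain ⟨U1, hU1⟩ := hne
      obtain ⟨hU1DC, hfU1⟩ := Finset.mem_filter.1 hU1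
      set V0 := g U1 with hV0
      have hV0C : V0 ∈ C := hVW1 U1 hU1DC
      have hWV0 : W ≤ V0 := hfU1 ▸ hVW3 U1 hU1DC
      have hsub : (D \ C).filter (fun U => f U = W) ⊆
          ((D.filter (fun U => W ≤ U)).erase V0) := by
        intro U hU
        obtain ⟨hUDC, hfU⟩ := Finset.mem_filter.1 hU
        have hUD := (Finset.mem_sdiff.1 hUDC).1
        have hUnC := (Finset.mem_sdiff.1 hUDC).2
        have hWU : W ≤ U := hfU ▸ hVW2 U hUDC
        have hgUC : g U ∈ C := hVW1 U hUDC
        have hWgU : W ≤ g U := hfU ▸ hVW3 U hUDC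
        have hgV0 : g U = V0 := by
          by_contra hgv
          have := hPC (g U) hgUC V0 hV0C hgv
          have hle : W ≤ g U ⊓ V0 := le_inf hWgU hWV0
          have hmono : finrank F ↥W ≤ finrank F ↥(g U ⊓ V0) := Submodule.finrank_mono hle
          have hWr : finrank F ↥W = r := hfU ▸ hVW4 U hUDC
          omega
        refine Finset.mem_erase.2 ⟨?_, Finset.mem_filter.2 ⟨hUD, hWU⟩⟩
        intro hUV0
        exact hUnC (hUV0 ▸ hV0C)
      have hV0mem : V0 ∈ D.filter (fun U => W ≤ U) :=
        Finset.mem_filter.2 ⟨hCD hV0C, hWV0⟩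
      calc ((D \ C).filter (fun U => f U = W)).card
          ≤ ((D.filter (fun U => W ≤ U)).erase V0).card := Finset.card_le_card hsub
        _ = (D.filter (fun U => W ≤ U)).card - 1 := Finset.card_erase_of_mem hV0mem
  -- main counting inequality over ℕ
  have hsum1 : ∑ W ∈ 𝒲, ((D.filter (fun U => W ≤ U)).card - 1) + 𝒲.card
      = ∑ W ∈ 𝒲, (D.filter (fun U => W ≤ U)).card := by
    rw [Finset.card_eq_sum_ones 𝒲, ← Finset.sum_add_distrib]
    refine Finset.sum_congr rfl (fun W hW => ?_)
    have := hc1 W hW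
    omega
  have hdouble : ∑ W ∈ 𝒲, (D.filter (fun U => W ≤ U)).card
      = ∑ U ∈ D, (𝒲.filter (fun W => W ≤ U)).card := by
    simp_rw [Finset.card_filter]
    exact Finset.sum_comm
  have hmain : D.card + 𝒲.card ≤ C.card + ∑ U ∈ D, (𝒲.filter (fun W => W ≤ U)).card := by
    have hsplit : (D \ C).card + C.card = D.card := Finset.card_sdiff_add_card_eq_card hCD
    have h2 : (D \ C).card ≤ ∑ W ∈ 𝒲, ((D.filter (fun U => W ≤ U)).card - 1) := by
      rw [hcount]
      exact Finset.sum_le_sum hfiber_le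
    calc D.card + 𝒲.card = C.card + ((D \ C).card + 𝒲.card) := by omega
      _ ≤ C.card + (∑ W ∈ 𝒲, ((D.filter (fun U => W ≤ U)).card - 1) + 𝒲.card) := by
          exact Nat.add_le_add_left (Nat.add_le_add_right h2 _) _
      _ = C.card + ∑ W ∈ 𝒲, (D.filter (fun U => W ≤ U)).card := by rw [hsum1]
      _ = C.card + ∑ U ∈ D, (𝒲.filter (fun W => W ≤ U)).card := by rw [hdouble]
  -- C is a code
  have hcode : IsGrassmannCode F n k (2 * δ + 2) C := by
    constructor
    · exact fun U hU => hD.1 U (hCD hU)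
    · intro U hU V hV hne
      have h := hPC U hU V hV hne
      have hUk : finrank F ↥U = k := hD.1 U (hCD hU)
      omega
  have hA : C.card ≤ maxCodeSize F n (2 * δ + 2) k := by
    apply le_csSup
    · refine ⟨Fintype.card (Submodule F (Fin n → F)), ?_⟩
      rintro M ⟨C', -, rfl⟩
      exact Finset.card_le_univ C'
    · exact ⟨C, hcode, rfl⟩
  -- conclude over ℝ
  have hsumG : (∑ U ∈ D, ((𝒲.filter (fun W => W ≤ U)).card : ℝ))
      = (D.card : ℝ) * gaussBinom q k r := by
    rw [Finset.sum_congr rfl hGcard, Finset.sum_const, nsmul_eq_mul]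
  have hmainR : (D.card : ℝ) + (𝒲.card : ℝ)
      ≤ (C.card : ℝ) + (D.card : ℝ) * gaussBinom q k r := by
    rw [← hsumG]
    exact_mod_cast hmain
  have hAC : (C.card : ℝ) ≤ (maxCodeSize F n (2 * δ + 2) k : ℝ) := Nat.cast_le.2 hA
  rw [ge_iff_le, ← hDcard]
  rw [hNcard] at hmainR
  linarith
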